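/- (Lemma 3.3) Under the Async-PADMM update rules, there exists a constant C ∈ ℝ such that for all t ≥ 1: L({x_k^{t+1}}, x^{t+1}; y^{t+1}) ≤ C − Σ_{i=T̄}^{t} Σ_{k=1}^K [ ((ρ_k − 7L_k)/2)‖x_k^{i+1} − x_k^i‖² + (α_k/2)‖x^{i+1} − x^i‖² ], where T̄ := max_k T_k and α_k := ρ_k − 2(1/ρ_k + 7L_k/(2ρ_k²)) L_k²(T_k+1)² − L_k T_k². -/

import Mathlib

open RealInnerProductSpace

/-- The augmented Lagrangian of the consensus problem. -/
noncomputable def augL {E : Type*} [NormedAddCommGroup E] [InnerProductSpace ℝ E]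
    {K : ℕ} (g : Fin K → E → ℝ) (h : E → ℝ) (ρ : Fin K → ℝ)
    (xk : Fin K → E) (x : E) (y : Fin K → E) : ℝ :=
  (∑ k, g k (xk k)) + h x + (∑ k, ⟪y k, xk k - x⟫) + ∑ k, ρ k / 2 * ‖xk k - x‖ ^ 2

section aux
variable {E : Type*} [NormedAddCommGroup E] [InnerProductSpace ℝ E]

/-- Quadratic descent lemma with constant `L` (not `L/2`, which suffices for us). -/
lemma descent_lemma [CompleteSpace E] (g : E → ℝ) (L : ℝ) (hL : 0 ≤ L)
    (hdiff : Differentiable ℝ g)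
    (hlip : ∀ u v : E, ‖gradient g u - gradient g v‖ ≤ L * ‖u - v‖) (u v : E) :
    g v ≤ g u + ⟪gradient g u, v - u⟫ + L * ‖v - u‖ ^ 2 := by
  set p : E →L[ℝ] ℝ := InnerProductSpace.toDual ℝ E (gradient g u) with hp
  have hfd : ∀ w : E, fderiv ℝ g w = InnerProductSpace.toDual ℝ E (gradient g w) := by
    intro w
    simp [gradient, LinearIsometryEquiv.apply_symm_apply]
  have key : ‖(g v - p v) - (g u - p u)‖ ≤ (L * ‖v - u‖) * ‖v - u‖ := by
    apply (convex_segment u v).norm_image_sub_le_of_norm_hasFDerivWithin_le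
      (f' := fun w => fderiv ℝ g w - p)
      (fun w _ => (((hdiff w).hasFDerivAt).sub (ContinuousLinearMap.hasFDerivAt p)).hasFDerivWithinAt)
      ?_ (left_mem_segment ℝ u v) (right_mem_segment ℝ u v)
    intro w hw
    show ‖fderiv ℝ g w - p‖ ≤ L * ‖v - u‖
    rw [hfd w, hp]
    have h1 : ‖InnerProductSpace.toDual ℝ E (gradient g w) - InnerProductSpace.toDual ℝ E (gradient g u)‖
        = ‖gradient g w - gradient g u‖ := by
      rw [← map_sub]; exact (InnerProductSpace.toDual ℝ E).norm_map _
    rw [h1]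
    refine (hlip w u).trans ?_
    gcongr
    · obtain ⟨a, b, ha, hb, hab, rfl⟩ := hw
      have : a • u + b • v - u = b • (v - u) := by
        rw [smul_sub]; rw [show a = 1 - b by linarith]; module
      rw [this, norm_smul, Real.norm_of_nonneg hb]
      nlinarith [norm_nonneg (v - u)]
  have hpv : p v - p u = ⟪gradient g u, v - u⟫ := by
    simp [hp, InnerProductSpace.toDual_apply_apply, inner_sub_right]
  have := (abs_le.mp (by simpa [Real.norm_eq_abs] using key)).2
  nlinarith [this]

lemma norm_combo_sq (θ : ℝ) (a b z : E) :
    ‖θ • a + (1 - θ) • b - z‖ ^ 2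
      = θ * ‖a - z‖ ^ 2 + (1 - θ) * ‖b - z‖ ^ 2 - θ * (1 - θ) * ‖a - b‖ ^ 2 := by
  have h1 : θ • a + (1 - θ) • b - z = θ • (a - z) + (1 - θ) • (b - z) := by module
  have h2 : a - b = (a - z) - (b - z) := by abel
  rw [h1, h2]
  set u := a - z; set v := b - z
  rw [← real_inner_self_eq_norm_sq, ← real_inner_self_eq_norm_sq, ← real_inner_self_eq_norm_sq,
    ← real_inner_self_eq_norm_sq]
  simp only [inner_add_add_self, inner_sub_sub_self, real_inner_smul_left, real_inner_smul_right]
  ring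

omit [InnerProductSpace ℝ E] in
lemma chain_bound (x : ℕ → E) {a b lo hi : ℕ} (hb : a ≤ b) (hlo : lo ≤ a) (hhi : b ≤ hi + 1) :
    ‖x b - x a‖ ≤ ∑ j ∈ Finset.Icc lo hi, ‖x (j + 1) - x j‖ := by
  have key : ∀ n, a ≤ n → ‖x n - x a‖ ≤ ∑ j ∈ Finset.Ico a n, ‖x (j + 1) - x j‖ := by
    intro n hn
    induction n with
    | zero => simp [Nat.le_zero.mp hn]
    | succ m ih =>
      rcases Nat.lt_or_ge a (m + 1) with hlt | hge
      · have ham : a ≤ m := Nat.lt_succ_iff.mp hlt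
        rw [Finset.sum_Ico_succ_top ham]
        calc ‖x (m + 1) - x a‖ ≤ ‖x m - x a‖ + ‖x (m + 1) - x m‖ := by
              have : x (m + 1) - x a = (x m - x a) + (x (m + 1) - x m) := by abel
              rw [this]; exact norm_add_le _ _
          _ ≤ _ := by linarith [ih ham]
      · have : a = m + 1 := le_antisymm hn hge
        simp [this]
  refine (key b hb).trans (Finset.sum_le_sum_of_subset_of_nonneg ?_ (by intros; positivity))
  intro j hj
  simp only [Finset.mem_Ico, Finset.mem_Icc] at *
  omega

omit [InnerProductSpace ℝ E] in
lemma chain_bound' (x : ℕ → E) {a b lo hi : ℕ} (hloa : lo ≤ a) (hlob : lo ≤ b)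
    (hhia : a ≤ hi + 1) (hhib : b ≤ hi + 1) :
    ‖x b - x a‖ ≤ ∑ j ∈ Finset.Icc lo hi, ‖x (j + 1) - x j‖ := by
  rcases le_total a b with hab | hab
  · exact chain_bound x hab hloa hhib
  · rw [← norm_neg]; simp only [neg_sub]; exact chain_bound x hab hlob hhia

/-- double-counting: each index `j` appears in at most `s` windows. -/
lemma window_count (a : ℕ → ℝ) (ha : ∀ j, 0 ≤ a j) (s t : ℕ) :
    ∑ i ∈ Finset.Icc 1 t, ∑ j ∈ Finset.Icc (i + 1 - s) i, a j
      ≤ s * ∑ j ∈ Finset.Icc 0 t, a j := by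
  have step : ∀ i ∈ Finset.Icc 1 t, ∑ j ∈ Finset.Icc (i + 1 - s) i, a j
      = ∑ j ∈ Finset.Icc 0 t, (if i + 1 - s ≤ j ∧ j ≤ i then a j else 0) := by
    intro i hi
    simp only [Finset.mem_Icc] at hi
    rw [Finset.sum_ite, Finset.sum_const_zero, add_zero]
    apply Finset.sum_congr _ (fun _ _ => rfl)
    ext j
    simp only [Finset.mem_Icc, Finset.mem_filter]
    omega
  rw [Finset.sum_congr rfl step, Finset.sum_comm]
  have inner_le : ∀ j ∈ Finset.Icc 0 t,
      ∑ i ∈ Finset.Icc 1 t, (if i + 1 - s ≤ j ∧ j ≤ i then a j else 0) ≤ s * a j := by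
    intro j _
    rw [Finset.sum_ite, Finset.sum_const_zero, add_zero, Finset.sum_const, nsmul_eq_mul]
    have hcard : ((Finset.Icc 1 t).filter (fun i => i + 1 - s ≤ j ∧ j ≤ i)).card ≤ s := by
      have hsub : (Finset.Icc 1 t).filter (fun i => i + 1 - s ≤ j ∧ j ≤ i)
          ⊆ Finset.Ico j (j + s) := by
        intro i hi
        simp only [Finset.mem_filter, Finset.mem_Icc, Finset.mem_Ico] at *
        omega
      simpa using (Finset.card_le_card hsub).trans (le_of_eq (Nat.card_Ico j (j + s)))
    calc (((Finset.Icc 1 t).filter (fun i => i + 1 - s ≤ j ∧ j ≤ i)).card : ℝ) * a j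
        ≤ (s : ℝ) * a j := by
          apply mul_le_mul_of_nonneg_right _ (ha j)
          exact_mod_cast hcard
      _ = _ := rfl
  calc ∑ j ∈ Finset.Icc 0 t, ∑ i ∈ Finset.Icc 1 t, (if i + 1 - s ≤ j ∧ j ≤ i then a j else 0)
      ≤ ∑ j ∈ Finset.Icc 0 t, (s : ℝ) * a j := Finset.sum_le_sum inner_le
    _ = s * ∑ j ∈ Finset.Icc 0 t, a j := by rw [Finset.mul_sum]

lemma quad_min (h : E → ℝ) (hh : ConvexOn ℝ Set.univ h) {X : Set E} (hX : Convex ℝ X)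
    (q : E → ℝ) (σ : ℝ)
    (hq : ∀ θ : ℝ, 0 ≤ θ → θ ≤ 1 → ∀ a b : E,
      q (θ • a + (1 - θ) • b) = θ * q a + (1 - θ) * q b - σ / 2 * θ * (1 - θ) * ‖a - b‖ ^ 2)
    {a b : E} (haX : a ∈ X) (hbX : b ∈ X)
    (hmin : ∀ u ∈ X, h a + q a ≤ h u + q u) :
    h a + q a ≤ h b + q b - σ / 2 * ‖a - b‖ ^ 2 := by
  have main : ∀ θ : ℝ, 0 ≤ θ → θ < 1 →
      h a + q a ≤ h b + q b - σ / 2 * θ * ‖a - b‖ ^ 2 := by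
    intro θ hθ0 hθ1
    have hθ1' : (0:ℝ) ≤ 1 - θ := by linarith
    have hmem : θ • a + (1 - θ) • b ∈ X := hX haX hbX hθ0 hθ1' (by ring)
    have hcvx : h (θ • a + (1 - θ) • b) ≤ θ * h a + (1 - θ) * h b := by
      have := hh.2 (Set.mem_univ a) (Set.mem_univ b) hθ0 hθ1' (by ring)
      simpa [smul_eq_mul] using this
    have := hmin _ hmem
    rw [hq θ hθ0 (by linarith)] at this
    nlinarith [this, hcvx]
  have htd : Filter.Tendsto
      (fun n : ℕ => h b + q b - σ / 2 * (1 - 1 / (n + 1 : ℝ)) * ‖a - b‖ ^ 2)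
      Filter.atTop (nhds (h b + q b - σ / 2 * ‖a - b‖ ^ 2)) := by
    have h0 : Filter.Tendsto (fun n : ℕ => 1 / (n + 1 : ℝ)) Filter.atTop (nhds 0) :=
      tendsto_one_div_add_atTop_nhds_zero_nat
    have := ((tendsto_const_nhds (x := (1:ℝ))).sub h0)
    have h2 := (((tendsto_const_nhds (x := σ/2)).mul this).mul
      (tendsto_const_nhds (x := ‖a - b‖ ^ 2)))
    have h3 := (tendsto_const_nhds (x := h b + q b)).sub h2
    simpa using h3
  refine ge_of_tendsto htd (Filter.Eventually.of_forall fun n => ?_)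
  have hn : (0:ℝ) < 1 / (n + 1 : ℝ) := by positivity
  exact main _ (by linarith [(show 1/(n+1:ℝ) ≤ 1 by
    rw [div_le_one (by positivity)]; linarith)]) (by linarith)

variable {K : ℕ}

lemma augL_y_diff (g : Fin K → E → ℝ) (h : E → ℝ) (ρ : Fin K → ℝ)
    (z : Fin K → E) (x : E) (y' y : Fin K → E) :
    augL g h ρ z x y' = augL g h ρ z x y + ∑ k, ⟪y' k - y k, z k - x⟫ := by
  simp only [augL, inner_sub_left, Finset.sum_sub_distrib]
  ring

lemma augL_z_diff (g : Fin K → E → ℝ) (h : E → ℝ) (ρ : Fin K → ℝ)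
    (z' z : Fin K → E) (x : E) (y : Fin K → E) :
    augL g h ρ z' x y = augL g h ρ z x y
      + ∑ k, (g k (z' k) - g k (z k) + ⟪y k, z' k - z k⟫
          + ρ k / 2 * (‖z' k - x‖ ^ 2 - ‖z k - x‖ ^ 2)) := by
  have hin : ∀ k : Fin K, ⟪y k, z' k - z k⟫ = ⟪y k, z' k - x⟫ - ⟪y k, z k - x⟫ := by
    intro k
    rw [← inner_sub_right]
    congr 1
    abel
  simp only [augL, hin, Finset.sum_add_distrib, Finset.sum_sub_distrib, mul_sub]
  ring

end aux

set_option maxHeartbeats 1000000 in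
theorem stmt_8 {E : Type*} [NormedAddCommGroup E] [InnerProductSpace ℝ E] [CompleteSpace E]
    {K : ℕ} (g : Fin K → E → ℝ) (h : E → ℝ) (L ρ : Fin K → ℝ) (T : Fin K → ℕ)
    (X : Set E) (x : ℕ → E) (xk : Fin K → ℕ → E) (y : Fin K → ℕ → E) (τ : Fin K → ℕ → ℕ)
    (hL : ∀ k, 0 < L k) (hρ : ∀ k, 0 < ρ k)
    (hdiff : ∀ k, Differentiable ℝ (g k))
    (hlip : ∀ k, ∀ u v : E, ‖gradient (g k) u - gradient (g k) v‖ ≤ L k * ‖u - v‖)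
    (hh : ConvexOn ℝ Set.univ h)
    (hXne : X.Nonempty) (hXcp : IsCompact X) (hXcv : Convex ℝ X)
    (hτ1 : ∀ k t, τ k t ≤ t) (hτ2 : ∀ k t, t ≤ τ k t + T k)
    (hxmem : ∀ t, x t ∈ X)
    (hxupd : ∀ t, ∀ u ∈ X,
      augL g h ρ (fun k => xk k t) (x (t + 1)) (fun k => y k t)
        ≤ augL g h ρ (fun k => xk k t) u (fun k => y k t))
    (hxk : ∀ k t, xk k (t + 1)
      = x (t + 1) - (ρ k)⁻¹ • (gradient (g k) (x (τ k (t + 1))) + y k t))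
    (hy : ∀ k t, y k (t + 1) = y k t + ρ k • (xk k (t + 1) - x (t + 1)))
    (Tbar : ℕ) (hTbar : Tbar = Finset.univ.sup T)
    (α : Fin K → ℝ)
    (hα : ∀ k, α k = ρ k - 2 * (1 / ρ k + 7 * L k / (2 * ρ k ^ 2)) * (L k) ^ 2
      * ((T k : ℝ) + 1) ^ 2 - L k * (T k : ℝ) ^ 2) :
    ∃ C : ℝ, ∀ t : ℕ, 1 ≤ t →
      augL g h ρ (fun k => xk k (t + 1)) (x (t + 1)) (fun k => y k (t + 1))
        ≤ C - ∑ i ∈ Finset.Icc Tbar t, ∑ k,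
            ((ρ k - 7 * L k) / 2 * ‖xk k (i + 1) - xk k i‖ ^ 2
              + α k / 2 * ‖x (i + 1) - x i‖ ^ 2) := by
  classical
  have hρ0 : ∀ k, ρ k ≠ 0 := fun k => ne_of_gt (hρ k)
  have hL0 : ∀ k, (0:ℝ) ≤ L k := fun k => le_of_lt (hL k)
  -- basic algebraic facts about the iterates
  have keyz : ∀ k i, y k i + ρ k • (xk k (i+1) - x (i+1))
      = -(gradient (g k) (x (τ k (i+1)))) := by
    intro k i
    rw [hxk k i, sub_sub_cancel_left, smul_neg, smul_inv_smul₀ (hρ0 k)]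
    abel
  have yfact : ∀ k i, y k (i+1) = -(gradient (g k) (x (τ k (i+1)))) := by
    intro k i
    rw [hy k i, keyz k i]
  have znorm : ∀ k t, ρ k * ‖xk k (t+2) - x (t+2)‖
      = ‖gradient (g k) (x (τ k (t+2))) - gradient (g k) (x (τ k (t+1)))‖ := by
    intro k t
    have h2 := keyz k (t+1)
    rw [yfact k t] at h2
    have h3 : ρ k • (xk k (t+2) - x (t+2))
        = -(gradient (g k) (x (τ k (t+2))) - gradient (g k) (x (τ k (t+1)))) := by
      have h4 : ρ k • (xk k (t + 1 + 1) - x (t + 1 + 1))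
          = -(gradient (g k) (x (τ k (t + 1 + 1))))
            + gradient (g k) (x (τ k (t + 1))) := by
        rw [← h2]; abel
      rw [show t + 2 = t + 1 + 1 from rfl, h4]; abel
    calc ρ k * ‖xk k (t+2) - x (t+2)‖ = ‖ρ k • (xk k (t+2) - x (t+2))‖ := by
          rw [norm_smul, Real.norm_of_nonneg (le_of_lt (hρ k))]
      _ = _ := by rw [h3, norm_neg]
  -- chain + Cauchy-Schwarz bounds
  have hchainA : ∀ k (t : ℕ),
      ‖gradient (g k) (x (τ k (t+2))) - gradient (g k) (x (τ k (t+1)))‖^2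
      ≤ L k^2 * (((T k:ℝ) + 1)
          * ∑ j ∈ Finset.Icc (t + 1 + 1 - (T k + 1)) (t+1), ‖x (j+1) - x j‖^2) := by
    intro k t
    have hch : ‖x (τ k (t+2)) - x (τ k (t+1))‖
        ≤ ∑ j ∈ Finset.Icc (t + 1 + 1 - (T k + 1)) (t+1), ‖x (j+1) - x j‖ := by
      apply chain_bound' x
      · have := hτ2 k (t+1); omega
      · have := hτ2 k (t+2); omega
      · have := hτ1 k (t+1); omega
      · have := hτ1 k (t+2); omega
    have hCS : (∑ j ∈ Finset.Icc (t + 1 + 1 - (T k + 1)) (t+1), ‖x (j+1) - x j‖)^2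
        ≤ ((T k:ℝ) + 1) * ∑ j ∈ Finset.Icc (t + 1 + 1 - (T k + 1)) (t+1), ‖x (j+1) - x j‖^2 := by
      refine (sq_sum_le_card_mul_sum_sq
        (s := Finset.Icc (t + 1 + 1 - (T k + 1)) (t+1))
        (f := fun j => ‖x (j+1) - x j‖)).trans ?_
      have hcard : ((Finset.Icc (t + 1 + 1 - (T k + 1)) (t+1)).card : ℝ) ≤ (T k:ℝ) + 1 := by
        have : (Finset.Icc (t + 1 + 1 - (T k + 1)) (t+1)).card ≤ T k + 1 := by
          rw [Nat.card_Icc]; omega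
        exact_mod_cast this
      exact mul_le_mul_of_nonneg_right hcard (by positivity)
    have hgl := hlip k (x (τ k (t+2))) (x (τ k (t+1)))
    have hnn1 : (0:ℝ) ≤ ‖x (τ k (t+2)) - x (τ k (t+1))‖ := norm_nonneg _
    have hnn2 : (0:ℝ) ≤ ∑ j ∈ Finset.Icc (t + 1 + 1 - (T k + 1)) (t+1), ‖x (j+1) - x j‖ := by
      positivity
    have h1 : ‖gradient (g k) (x (τ k (t+2))) - gradient (g k) (x (τ k (t+1)))‖^2
        ≤ L k^2 * ‖x (τ k (t+2)) - x (τ k (t+1))‖^2 := by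
      nlinarith [hgl, hnn1, norm_nonneg
        (gradient (g k) (x (τ k (t+2))) - gradient (g k) (x (τ k (t+1)))), hL0 k]
    have h2 : ‖x (τ k (t+2)) - x (τ k (t+1))‖^2
        ≤ (∑ j ∈ Finset.Icc (t + 1 + 1 - (T k + 1)) (t+1), ‖x (j+1) - x j‖)^2 := by
      nlinarith [hch, hnn1, hnn2]
    nlinarith [h1, h2, hCS, sq_nonneg (L k)]
  have hchainB : ∀ k (i : ℕ),
      ‖x (i+1) - x (τ k (i+1))‖^2
      ≤ (T k : ℝ) * ∑ j ∈ Finset.Icc (i + 1 - T k) i, ‖x (j+1) - x j‖^2 := by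
    intro k i
    have hch : ‖x (i+1) - x (τ k (i+1))‖
        ≤ ∑ j ∈ Finset.Icc (i + 1 - T k) i, ‖x (j+1) - x j‖ := by
      apply chain_bound' x
      · have := hτ2 k (i+1); omega
      · omega
      · have := hτ1 k (i+1); omega
      · omega
    have hCS : (∑ j ∈ Finset.Icc (i + 1 - T k) i, ‖x (j+1) - x j‖)^2
        ≤ (T k:ℝ) * ∑ j ∈ Finset.Icc (i + 1 - T k) i, ‖x (j+1) - x j‖^2 := by
      refine (sq_sum_le_card_mul_sum_sq
        (s := Finset.Icc (i + 1 - T k) i)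
        (f := fun j => ‖x (j+1) - x j‖)).trans ?_
      have hcard : ((Finset.Icc (i + 1 - T k) i).card : ℝ) ≤ (T k:ℝ) := by
        have : (Finset.Icc (i + 1 - T k) i).card ≤ T k := by
          rw [Nat.card_Icc]; omega
        exact_mod_cast this
      exact mul_le_mul_of_nonneg_right hcard (by positivity)
    have hnn1 : (0:ℝ) ≤ ‖x (i+1) - x (τ k (i+1))‖ := norm_nonneg _
    have hnn2 : (0:ℝ) ≤ ∑ j ∈ Finset.Icc (i + 1 - T k) i, ‖x (j+1) - x j‖ := by positivity
    have h2 : ‖x (i+1) - x (τ k (i+1))‖^2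
        ≤ (∑ j ∈ Finset.Icc (i + 1 - T k) i, ‖x (j+1) - x j‖)^2 := by
      nlinarith [hch, hnn1, hnn2]
    linarith [h2, hCS]
  -- per-k bound for the z-update
  have hBk : ∀ (k : Fin K) (i : ℕ),
      g k (xk k (i+1)) - g k (xk k i) + ⟪y k i, xk k (i+1) - xk k i⟫
        + ρ k / 2 * (‖xk k (i+1) - x (i+1)‖^2 - ‖xk k i - x (i+1)‖^2)
      ≤ -((ρ k - 7 * L k)/2) * ‖xk k (i+1) - xk k i‖^2
        + L k/4 * ‖xk k (i+1) - x (i+1)‖^2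
        + L k/2 * ‖x (i+1) - x (τ k (i+1))‖^2 := by
    intro k i
    have hiden : ⟪y k i, xk k (i+1) - xk k i⟫
        + ρ k / 2 * (‖xk k (i+1) - x (i+1)‖^2 - ‖xk k i - x (i+1)‖^2)
        = ⟪y k i + ρ k • (xk k (i+1) - x (i+1)), xk k (i+1) - xk k i⟫
          - ρ k/2 * ‖xk k (i+1) - xk k i‖^2 := by
      have hzz : xk k i - x (i+1) = (xk k (i+1) - x (i+1)) - (xk k (i+1) - xk k i) := by abel
      rw [hzz, norm_sub_sq_real (xk k (i+1) - x (i+1)) (xk k (i+1) - xk k i), inner_add_left,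
        real_inner_smul_left]
      ring
    rw [keyz k i] at hiden
    have hneg : ⟪-(gradient (g k) (x (τ k (i+1)))), xk k (i+1) - xk k i⟫
        = -⟪gradient (g k) (x (τ k (i+1))), xk k (i+1) - xk k i⟫ := inner_neg_left _ _
    have hd := descent_lemma (g k) (L k) (hL0 k) (hdiff k) (hlip k) (xk k i) (xk k (i+1))
    have hswap : ⟪gradient (g k) (xk k i) - gradient (g k) (xk k (i+1)),
        xk k (i+1) - xk k i⟫ ≤ L k * ‖xk k (i+1) - xk k i‖^2 := by
      refine (real_inner_le_norm _ _).trans ?_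
      have h1 := hlip k (xk k i) (xk k (i+1))
      rw [norm_sub_rev (xk k i) (xk k (i+1))] at h1
      calc ‖gradient (g k) (xk k i) - gradient (g k) (xk k (i+1))‖ * ‖xk k (i+1) - xk k i‖
          ≤ (L k * ‖xk k (i+1) - xk k i‖) * ‖xk k (i+1) - xk k i‖ :=
            mul_le_mul_of_nonneg_right h1 (norm_nonneg _)
        _ = L k * ‖xk k (i+1) - xk k i‖^2 := by ring
    have hcross1 : ⟪gradient (g k) (xk k (i+1)) - gradient (g k) (x (i+1)),
        xk k (i+1) - xk k i⟫ ≤ L k * (‖xk k (i+1) - x (i+1)‖ * ‖xk k (i+1) - xk k i‖) := by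
      refine (real_inner_le_norm _ _).trans ?_
      have h1 := hlip k (xk k (i+1)) (x (i+1))
      calc ‖gradient (g k) (xk k (i+1)) - gradient (g k) (x (i+1))‖ * ‖xk k (i+1) - xk k i‖
          ≤ (L k * ‖xk k (i+1) - x (i+1)‖) * ‖xk k (i+1) - xk k i‖ :=
            mul_le_mul_of_nonneg_right h1 (norm_nonneg _)
        _ = _ := by ring
    have hcross2 : ⟪gradient (g k) (x (i+1)) - gradient (g k) (x (τ k (i+1))),
        xk k (i+1) - xk k i⟫ ≤ L k * (‖x (i+1) - x (τ k (i+1))‖ * ‖xk k (i+1) - xk k i‖) := by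
      refine (real_inner_le_norm _ _).trans ?_
      have h1 := hlip k (x (i+1)) (x (τ k (i+1)))
      calc ‖gradient (g k) (x (i+1)) - gradient (g k) (x (τ k (i+1)))‖ * ‖xk k (i+1) - xk k i‖
          ≤ (L k * ‖x (i+1) - x (τ k (i+1))‖) * ‖xk k (i+1) - xk k i‖ :=
            mul_le_mul_of_nonneg_right h1 (norm_nonneg _)
        _ = _ := by ring
    have hy1 : L k * (‖xk k (i+1) - x (i+1)‖ * ‖xk k (i+1) - xk k i‖)
        ≤ L k/4 * ‖xk k (i+1) - x (i+1)‖^2 + L k * ‖xk k (i+1) - xk k i‖^2 := by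
      nlinarith [sq_nonneg (‖xk k (i+1) - x (i+1)‖ - 2 * ‖xk k (i+1) - xk k i‖), hL k]
    have hy2 : L k * (‖x (i+1) - x (τ k (i+1))‖ * ‖xk k (i+1) - xk k i‖)
        ≤ L k/2 * ‖x (i+1) - x (τ k (i+1))‖^2 + L k/2 * ‖xk k (i+1) - xk k i‖^2 := by
      nlinarith [sq_nonneg (‖x (i+1) - x (τ k (i+1))‖ - ‖xk k (i+1) - xk k i‖), hL k]
    have htel : ⟪gradient (g k) (xk k i), xk k (i+1) - xk k i⟫
        - ⟪gradient (g k) (x (τ k (i+1))), xk k (i+1) - xk k i⟫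
        = ⟪gradient (g k) (xk k i) - gradient (g k) (xk k (i+1)), xk k (i+1) - xk k i⟫
          + ⟪gradient (g k) (xk k (i+1)) - gradient (g k) (x (i+1)), xk k (i+1) - xk k i⟫
          + ⟪gradient (g k) (x (i+1)) - gradient (g k) (x (τ k (i+1))),
              xk k (i+1) - xk k i⟫ := by
      simp only [inner_sub_left]; ring
    linarith [hd, hswap, hcross1, hcross2, hy1, hy2, htel, hiden, hneg]
  -- the three update steps
  have stepA : ∀ i : ℕ, augL g h ρ (fun k => xk k (i+1)) (x (i+1)) (fun k => y k (i+1))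
      = augL g h ρ (fun k => xk k (i+1)) (x (i+1)) (fun k => y k i)
        + ∑ k, ρ k * ‖xk k (i+1) - x (i+1)‖^2 := by
    intro i
    rw [augL_y_diff g h ρ (fun k => xk k (i+1)) (x (i+1)) (fun k => y k (i+1)) (fun k => y k i)]
    congr 1
    apply Finset.sum_congr rfl
    intro k _
    rw [hy k i, add_sub_cancel_left, real_inner_smul_left, real_inner_self_eq_norm_sq]
  have stepB : ∀ i : ℕ, augL g h ρ (fun k => xk k (i+1)) (x (i+1)) (fun k => y k i)
      ≤ augL g h ρ (fun k => xk k i) (x (i+1)) (fun k => y k i)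
        + ∑ k, (-((ρ k - 7 * L k)/2) * ‖xk k (i+1) - xk k i‖^2
            + L k/4 * ‖xk k (i+1) - x (i+1)‖^2
            + L k/2 * ‖x (i+1) - x (τ k (i+1))‖^2) := by
    intro i
    rw [augL_z_diff g h ρ (fun k => xk k (i+1)) (fun k => xk k i) (x (i+1)) (fun k => y k i)]
    exact add_le_add (le_refl _) (Finset.sum_le_sum (fun k _ => hBk k i))
  have stepC : ∀ i : ℕ, augL g h ρ (fun k => xk k i) (x (i+1)) (fun k => y k i)
      ≤ augL g h ρ (fun k => xk k i) (x i) (fun k => y k i)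
        - (∑ k, ρ k)/2 * ‖x (i+1) - x i‖^2 := by
    intro i
    set q : E → ℝ := fun u => (∑ k, g k (xk k i)) + (∑ k, ⟪y k i, xk k i - u⟫)
      + ∑ k, ρ k / 2 * ‖xk k i - u‖ ^ 2 with hqdef
    have hrep : ∀ u : E, augL g h ρ (fun k => xk k i) u (fun k => y k i) = h u + q u := by
      intro u; simp only [augL, hqdef]; ring
    have hq : ∀ θ : ℝ, 0 ≤ θ → θ ≤ 1 → ∀ a b : E,
        q (θ • a + (1 - θ) • b)
          = θ * q a + (1-θ) * q b - (∑ k, ρ k)/2 * θ * (1-θ) * ‖a - b‖^2 := by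
      intro θ _ _ a b
      simp only [hqdef]
      have h2 : ∀ k : Fin K, ⟪y k i, xk k i - (θ • a + (1 - θ) • b)⟫
          = θ * ⟪y k i, xk k i - a⟫ + (1 - θ) * ⟪y k i, xk k i - b⟫ := by
        intro k
        have h1 : xk k i - (θ • a + (1 - θ) • b)
            = θ • (xk k i - a) + (1 - θ) • (xk k i - b) := by module
        rw [h1, inner_add_right, real_inner_smul_right, real_inner_smul_right]
      have h3 : ∀ k : Fin K, ρ k / 2 * ‖xk k i - (θ • a + (1 - θ) • b)‖ ^ 2
          = θ * (ρ k / 2 * ‖xk k i - a‖ ^ 2) + (1 - θ) * (ρ k / 2 * ‖xk k i - b‖ ^ 2)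
            - ρ k * (θ * ((1 - θ) * ‖a - b‖ ^ 2)) / 2 := by
        intro k
        rw [norm_sub_rev (xk k i) (θ • a + (1 - θ) • b), norm_combo_sq,
          norm_sub_rev a (xk k i), norm_sub_rev b (xk k i)]
        ring
      rw [Finset.sum_congr rfl (fun k _ => h2 k), Finset.sum_congr rfl (fun k _ => h3 k)]
      rw [Finset.sum_add_distrib, Finset.sum_sub_distrib, Finset.sum_add_distrib,
        ← Finset.mul_sum, ← Finset.mul_sum, ← Finset.mul_sum, ← Finset.mul_sum,
        ← Finset.sum_div, ← Finset.sum_mul]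
      ring
    have hmin : ∀ u ∈ X, h (x (i+1)) + q (x (i+1)) ≤ h u + q u := by
      intro u hu
      rw [← hrep, ← hrep]
      exact hxupd i u hu
    have hfin := quad_min h hh hXcv q (∑ k, ρ k) hq (hxmem (i+1)) (hxmem i) hmin
    rw [← hrep, ← hrep] at hfin
    exact hfin
  -- combined one-step estimate (for steps i = t+1 ≥ 1)
  have step : ∀ t : ℕ,
      augL g h ρ (fun k => xk k (t+1+1)) (x (t+1+1)) (fun k => y k (t+1+1))
      ≤ augL g h ρ (fun k => xk k (t+1)) (x (t+1)) (fun k => y k (t+1))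
        - ((∑ k, ρ k)/2 * ‖x (t+1+1) - x (t+1)‖^2
          + ∑ k, (ρ k - 7*L k)/2 * ‖xk k (t+1+1) - xk k (t+1)‖^2)
        + ∑ k, ((ρ k + L k/4)/ρ k^2 * L k^2 * (((T k:ℝ)+1)
              * ∑ j ∈ Finset.Icc (t + 1 + 1 - (T k + 1)) (t+1), ‖x (j+1) - x j‖^2)
            + L k/2 * ((T k:ℝ) * ∑ j ∈ Finset.Icc (t + 1 + 1 - T k) (t+1), ‖x (j+1) - x j‖^2)) := by
    intro t
    have hA := stepA (t+1)
    have hB := stepB (t+1)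
    have hC := stepC (t+1)
    have hcomb : ∀ k : Fin K,
        ρ k * ‖xk k (t+1+1) - x (t+1+1)‖^2 + L k/4 * ‖xk k (t+1+1) - x (t+1+1)‖^2
        ≤ (ρ k + L k/4)/ρ k^2 * L k^2 * (((T k:ℝ)+1)
            * ∑ j ∈ Finset.Icc (t + 1 + 1 - (T k + 1)) (t+1), ‖x (j+1) - x j‖^2) := by
      intro k
      have hz : ρ k * ‖xk k (t+1+1) - x (t+1+1)‖
          = ‖gradient (g k) (x (τ k (t+1+1))) - gradient (g k) (x (τ k (t+1)))‖ := znorm k t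
      have hc : ‖gradient (g k) (x (τ k (t+1+1))) - gradient (g k) (x (τ k (t+1)))‖^2
          ≤ L k^2 * (((T k:ℝ)+1)
              * ∑ j ∈ Finset.Icc (t + 1 + 1 - (T k + 1)) (t+1), ‖x (j+1) - x j‖^2) :=
        hchainA k t
      have hrw : ρ k^2 * ‖xk k (t+1+1) - x (t+1+1)‖^2
          = ‖gradient (g k) (x (τ k (t+1+1))) - gradient (g k) (x (τ k (t+1)))‖^2 := by
        rw [← hz]; ring
      have hfrac : (0:ℝ) ≤ (ρ k + L k/4)/ρ k^2 :=
        div_nonneg (by linarith [hρ k, hL0 k]) (by positivity)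
      have e1 : ρ k * ‖xk k (t+1+1) - x (t+1+1)‖^2 + L k/4 * ‖xk k (t+1+1) - x (t+1+1)‖^2
          = (ρ k + L k/4)/ρ k^2 * (ρ k^2 * ‖xk k (t+1+1) - x (t+1+1)‖^2) := by
        field_simp [hρ0 k]
      calc ρ k * ‖xk k (t+1+1) - x (t+1+1)‖^2 + L k/4 * ‖xk k (t+1+1) - x (t+1+1)‖^2
          = (ρ k + L k/4)/ρ k^2 * (ρ k^2 * ‖xk k (t+1+1) - x (t+1+1)‖^2) := e1
        _ = (ρ k + L k/4)/ρ k^2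
            * ‖gradient (g k) (x (τ k (t+1+1))) - gradient (g k) (x (τ k (t+1)))‖^2 := by
            rw [hrw]
        _ ≤ (ρ k + L k/4)/ρ k^2 * (L k^2 * (((T k:ℝ)+1)
              * ∑ j ∈ Finset.Icc (t + 1 + 1 - (T k + 1)) (t+1), ‖x (j+1) - x j‖^2)) :=
            mul_le_mul_of_nonneg_left hc hfrac
        _ = _ := by ring
    have hxt : ∀ k : Fin K, L k/2 * ‖x (t+1+1) - x (τ k (t+1+1))‖^2
        ≤ L k/2 * ((T k:ℝ) * ∑ j ∈ Finset.Icc (t + 1 + 1 - T k) (t+1), ‖x (j+1) - x j‖^2) :=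
      fun k => mul_le_mul_of_nonneg_left (hchainB k (t+1)) (by linarith [hL0 k])
    have hsum : ∑ k, ((-((ρ k - 7 * L k)/2) * ‖xk k (t+1+1) - xk k (t+1)‖^2
          + L k/4 * ‖xk k (t+1+1) - x (t+1+1)‖^2
          + L k/2 * ‖x (t+1+1) - x (τ k (t+1+1))‖^2)
        + ρ k * ‖xk k (t+1+1) - x (t+1+1)‖^2)
        ≤ ∑ k, ((-((ρ k - 7 * L k)/2) * ‖xk k (t+1+1) - xk k (t+1)‖^2)
          + ((ρ k + L k/4)/ρ k^2 * L k^2 * (((T k:ℝ)+1)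
                * ∑ j ∈ Finset.Icc (t + 1 + 1 - (T k + 1)) (t+1), ‖x (j+1) - x j‖^2)
              + L k/2 * ((T k:ℝ) * ∑ j ∈ Finset.Icc (t + 1 + 1 - T k) (t+1), ‖x (j+1) - x j‖^2))) :=
      Finset.sum_le_sum (fun k _ => by linarith [hcomb k, hxt k])
    have e2 : ∑ k, ((-((ρ k - 7 * L k)/2) * ‖xk k (t+1+1) - xk k (t+1)‖^2
          + L k/4 * ‖xk k (t+1+1) - x (t+1+1)‖^2
          + L k/2 * ‖x (t+1+1) - x (τ k (t+1+1))‖^2)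
        + ρ k * ‖xk k (t+1+1) - x (t+1+1)‖^2)
        = ∑ k, (-((ρ k - 7 * L k)/2) * ‖xk k (t+1+1) - xk k (t+1)‖^2
          + L k/4 * ‖xk k (t+1+1) - x (t+1+1)‖^2
          + L k/2 * ‖x (t+1+1) - x (τ k (t+1+1))‖^2)
          + ∑ k, ρ k * ‖xk k (t+1+1) - x (t+1+1)‖^2 := Finset.sum_add_distrib
    have e3 : ∑ k, ((-((ρ k - 7 * L k)/2) * ‖xk k (t+1+1) - xk k (t+1)‖^2)
          + ((ρ k + L k/4)/ρ k^2 * L k^2 * (((T k:ℝ)+1)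
                * ∑ j ∈ Finset.Icc (t + 1 + 1 - (T k + 1)) (t+1), ‖x (j+1) - x j‖^2)
              + L k/2 * ((T k:ℝ) * ∑ j ∈ Finset.Icc (t + 1 + 1 - T k) (t+1), ‖x (j+1) - x j‖^2)))
        = ∑ k, (-((ρ k - 7 * L k)/2) * ‖xk k (t+1+1) - xk k (t+1)‖^2)
          + ∑ k, ((ρ k + L k/4)/ρ k^2 * L k^2 * (((T k:ℝ)+1)
                * ∑ j ∈ Finset.Icc (t + 1 + 1 - (T k + 1)) (t+1), ‖x (j+1) - x j‖^2)
              + L k/2 * ((T k:ℝ) * ∑ j ∈ Finset.Icc (t + 1 + 1 - T k) (t+1), ‖x (j+1) - x j‖^2)) :=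
      Finset.sum_add_distrib
    have e4 : ∑ k, (-((ρ k - 7 * L k)/2) * ‖xk k (t+1+1) - xk k (t+1)‖^2)
        = -∑ k, (ρ k - 7 * L k)/2 * ‖xk k (t+1+1) - xk k (t+1)‖^2 := by
      rw [← Finset.sum_neg_distrib]
      exact Finset.sum_congr rfl (fun k _ => by ring)
    linarith [hA, hB, hC, hsum, e2, e3, e4]
  -- summed estimate
  have sumstep : ∀ t : ℕ,
      augL g h ρ (fun k => xk k (t+1)) (x (t+1)) (fun k => y k (t+1))
        + ∑ i ∈ Finset.Icc 1 t, ((∑ k, ρ k)/2 * ‖x (i+1) - x i‖^2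
            + ∑ k, (ρ k - 7*L k)/2 * ‖xk k (i+1) - xk k i‖^2)
      ≤ augL g h ρ (fun k => xk k 1) (x 1) (fun k => y k 1)
        + ∑ i ∈ Finset.Icc 1 t, ∑ k, ((ρ k + L k/4)/ρ k^2 * L k^2 * (((T k:ℝ)+1)
              * ∑ j ∈ Finset.Icc (i + 1 - (T k + 1)) i, ‖x (j+1) - x j‖^2)
            + L k/2 * ((T k:ℝ) * ∑ j ∈ Finset.Icc (i + 1 - T k) i, ‖x (j+1) - x j‖^2)) := by
    intro t
    induction t with
    | zero =>
      rw [Finset.Icc_eq_empty (by omega : ¬(1:ℕ) ≤ 0)]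
      simp
    | succ n ih =>
      rw [Finset.sum_Icc_succ_top (by omega : 1 ≤ n + 1),
        Finset.sum_Icc_succ_top (by omega : 1 ≤ n + 1)]
      have hst := step n
      linarith [hst, ih]
  -- double counting of the windows
  have count : ∀ t : ℕ,
      ∑ i ∈ Finset.Icc 1 t, ∑ k, ((ρ k + L k/4)/ρ k^2 * L k^2 * (((T k:ℝ)+1)
            * ∑ j ∈ Finset.Icc (i + 1 - (T k + 1)) i, ‖x (j+1) - x j‖^2)
          + L k/2 * ((T k:ℝ) * ∑ j ∈ Finset.Icc (i + 1 - T k) i, ‖x (j+1) - x j‖^2))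
      ≤ ∑ k, ((ρ k + L k/4)/ρ k^2 * L k^2 * ((T k:ℝ)+1)^2 + L k/2 * (T k:ℝ)^2)
          * (‖x (0+1) - x 0‖^2 + ∑ i ∈ Finset.Icc 1 t, ‖x (i+1) - x i‖^2) := by
    intro t
    rw [Finset.sum_comm]
    apply Finset.sum_le_sum
    intro k _
    have hsplit : ∑ j ∈ Finset.Icc 0 t, ‖x (j+1) - x j‖^2
        = ‖x (0+1) - x 0‖^2 + ∑ j ∈ Finset.Icc 1 t, ‖x (j+1) - x j‖^2 := by
      have hins : Finset.Icc 0 t = insert 0 (Finset.Icc 1 t) := by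
        ext m; simp only [Finset.mem_Icc, Finset.mem_insert]; omega
      rw [hins, Finset.sum_insert (by simp)]
    have w1 := window_count (fun j => ‖x (j+1) - x j‖^2) (fun j => sq_nonneg _) (T k + 1) t
    have w2 := window_count (fun j => ‖x (j+1) - x j‖^2) (fun j => sq_nonneg _) (T k) t
    rw [show ((T k + 1 : ℕ) : ℝ) = (T k : ℝ) + 1 by push_cast; ring] at w1
    have e1 : ∑ i ∈ Finset.Icc 1 t, ((ρ k + L k/4)/ρ k^2 * L k^2 * (((T k:ℝ)+1)
            * ∑ j ∈ Finset.Icc (i + 1 - (T k + 1)) i, ‖x (j+1) - x j‖^2)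
          + L k/2 * ((T k:ℝ) * ∑ j ∈ Finset.Icc (i + 1 - T k) i, ‖x (j+1) - x j‖^2))
        = (ρ k + L k/4)/ρ k^2 * L k^2 * ((T k:ℝ)+1)
            * ∑ i ∈ Finset.Icc 1 t, ∑ j ∈ Finset.Icc (i + 1 - (T k + 1)) i, ‖x (j+1) - x j‖^2
          + L k/2 * (T k:ℝ)
            * ∑ i ∈ Finset.Icc 1 t, ∑ j ∈ Finset.Icc (i + 1 - T k) i, ‖x (j+1) - x j‖^2 := by
      rw [Finset.sum_add_distrib, Finset.mul_sum, Finset.mul_sum]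
      congr 1
      · exact Finset.sum_congr rfl (fun i _ => by ring)
      · exact Finset.sum_congr rfl (fun i _ => by ring)
    rw [e1]
    have hc1 : (0:ℝ) ≤ (ρ k + L k/4)/ρ k^2 * L k^2 * ((T k:ℝ)+1) := by
      apply mul_nonneg (mul_nonneg (div_nonneg (by linarith [hρ k, hL0 k]) (by positivity))
        (by positivity)) (by positivity)
    have hc2 : (0:ℝ) ≤ L k/2 * (T k:ℝ) := by
      apply mul_nonneg (by linarith [hL0 k]) (by positivity)
    calc (ρ k + L k/4)/ρ k^2 * L k^2 * ((T k:ℝ)+1)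
            * ∑ i ∈ Finset.Icc 1 t, ∑ j ∈ Finset.Icc (i + 1 - (T k + 1)) i, ‖x (j+1) - x j‖^2
          + L k/2 * (T k:ℝ)
            * ∑ i ∈ Finset.Icc 1 t, ∑ j ∈ Finset.Icc (i + 1 - T k) i, ‖x (j+1) - x j‖^2
        ≤ (ρ k + L k/4)/ρ k^2 * L k^2 * ((T k:ℝ)+1)
            * (((T k:ℝ)+1) * ∑ j ∈ Finset.Icc 0 t, ‖x (j+1) - x j‖^2)
          + L k/2 * (T k:ℝ) * ((T k:ℝ) * ∑ j ∈ Finset.Icc 0 t, ‖x (j+1) - x j‖^2) := by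
          apply add_le_add
          · exact mul_le_mul_of_nonneg_left w1 hc1
          · exact mul_le_mul_of_nonneg_left w2 hc2
      _ = ((ρ k + L k/4)/ρ k^2 * L k^2 * ((T k:ℝ)+1)^2 + L k/2 * (T k:ℝ)^2)
            * (‖x (0+1) - x 0‖^2 + ∑ i ∈ Finset.Icc 1 t, ‖x (i+1) - x i‖^2) := by
          rw [hsplit]; ring
  -- coefficient comparison with α
  have hcoef : ∀ k : Fin K, α k/2
      ≤ ρ k/2 - ((ρ k + L k/4)/ρ k^2 * L k^2 * ((T k:ℝ)+1)^2 + L k/2 * (T k:ℝ)^2) := by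
    intro k
    rw [hα k]
    have h1 : (0:ℝ) < ρ k := hρ k
    have h2 : (0:ℝ) ≤ L k := hL0 k
    have ediff : 1/ρ k + 7*L k/(2*ρ k^2) - (ρ k + L k/4)/ρ k^2
        = (7*L k/2 - L k/4)/ρ k^2 := by
      field_simp
      ring
    have hkey : (ρ k + L k/4)/ρ k^2 ≤ 1/ρ k + 7*L k/(2*ρ k^2) := by
      have h3 : (0:ℝ) ≤ (7*L k/2 - L k/4)/ρ k^2 :=
        div_nonneg (by linarith) (by positivity)
      linarith [ediff]
    have hmul := mul_le_mul_of_nonneg_right hkey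
      (by positivity : (0:ℝ) ≤ L k^2 * ((T k:ℝ)+1)^2)
    nlinarith [hmul]
  -- global bound with the true coefficients
  have sumbound : ∀ t : ℕ,
      augL g h ρ (fun k => xk k (t+1)) (x (t+1)) (fun k => y k (t+1))
        + ∑ i ∈ Finset.Icc 1 t, ∑ k, ((ρ k - 7 * L k) / 2 * ‖xk k (i + 1) - xk k i‖ ^ 2
            + α k / 2 * ‖x (i + 1) - x i‖ ^ 2)
      ≤ augL g h ρ (fun k => xk k 1) (x 1) (fun k => y k 1)
        + (∑ k, ((ρ k + L k/4)/ρ k^2 * L k^2 * ((T k:ℝ)+1)^2 + L k/2 * (T k:ℝ)^2))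
            * ‖x (0+1) - x 0‖^2 := by
    intro t
    have h1 := sumstep t
    have h2 := count t
    have hper : ∀ i : ℕ,
        ∑ k, ((ρ k - 7 * L k) / 2 * ‖xk k (i + 1) - xk k i‖ ^ 2
            + α k / 2 * ‖x (i + 1) - x i‖ ^ 2)
        ≤ ((∑ k, ρ k)/2 * ‖x (i+1) - x i‖^2
            + ∑ k, (ρ k - 7*L k)/2 * ‖xk k (i+1) - xk k i‖^2)
          - (∑ k, ((ρ k + L k/4)/ρ k^2 * L k^2 * ((T k:ℝ)+1)^2 + L k/2 * (T k:ℝ)^2))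
              * ‖x (i+1) - x i‖^2 := by
      intro i
      rw [Finset.sum_add_distrib]
      have hαsum : ∑ k, α k/2 * ‖x (i+1) - x i‖^2
          ≤ (∑ k, (ρ k/2 - ((ρ k + L k/4)/ρ k^2 * L k^2 * ((T k:ℝ)+1)^2
              + L k/2 * (T k:ℝ)^2))) * ‖x (i+1) - x i‖^2 := by
        rw [Finset.sum_mul]
        exact Finset.sum_le_sum (fun k _ =>
          mul_le_mul_of_nonneg_right (hcoef k) (sq_nonneg _))
      have e5 : (∑ k, (ρ k/2 - ((ρ k + L k/4)/ρ k^2 * L k^2 * ((T k:ℝ)+1)^2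
              + L k/2 * (T k:ℝ)^2))) * ‖x (i+1) - x i‖^2
          = (∑ k, ρ k)/2 * ‖x (i+1) - x i‖^2
            - (∑ k, ((ρ k + L k/4)/ρ k^2 * L k^2 * ((T k:ℝ)+1)^2 + L k/2 * (T k:ℝ)^2))
                * ‖x (i+1) - x i‖^2 := by
        rw [Finset.sum_sub_distrib, Finset.sum_div]
        ring
      linarith [hαsum, e5]
    have h3 := Finset.sum_le_sum (fun i (_ : i ∈ Finset.Icc 1 t) => hper i)
    have e6 : ∑ i ∈ Finset.Icc 1 t, (((∑ k, ρ k)/2 * ‖x (i+1) - x i‖^2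
            + ∑ k, (ρ k - 7*L k)/2 * ‖xk k (i+1) - xk k i‖^2)
          - (∑ k, ((ρ k + L k/4)/ρ k^2 * L k^2 * ((T k:ℝ)+1)^2 + L k/2 * (T k:ℝ)^2))
              * ‖x (i+1) - x i‖^2)
        = (∑ i ∈ Finset.Icc 1 t, ((∑ k, ρ k)/2 * ‖x (i+1) - x i‖^2
            + ∑ k, (ρ k - 7*L k)/2 * ‖xk k (i+1) - xk k i‖^2))
          - (∑ k, ((ρ k + L k/4)/ρ k^2 * L k^2 * ((T k:ℝ)+1)^2 + L k/2 * (T k:ℝ)^2))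
              * ∑ i ∈ Finset.Icc 1 t, ‖x (i+1) - x i‖^2 := by
      rw [Finset.sum_sub_distrib, ← Finset.mul_sum]
    have e7 : ∑ k, ((ρ k + L k/4)/ρ k^2 * L k^2 * ((T k:ℝ)+1)^2 + L k/2 * (T k:ℝ)^2)
          * (‖x (0+1) - x 0‖^2 + ∑ i ∈ Finset.Icc 1 t, ‖x (i+1) - x i‖^2)
        = (∑ k, ((ρ k + L k/4)/ρ k^2 * L k^2 * ((T k:ℝ)+1)^2 + L k/2 * (T k:ℝ)^2))
            * ‖x (0+1) - x 0‖^2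
          + (∑ k, ((ρ k + L k/4)/ρ k^2 * L k^2 * ((T k:ℝ)+1)^2 + L k/2 * (T k:ℝ)^2))
            * ∑ i ∈ Finset.Icc 1 t, ‖x (i+1) - x i‖^2 := by
      rw [← Finset.sum_mul]
      ring
    linarith [h1, h2, h3, e6, e7]
  -- choice of the constant
  refine ⟨augL g h ρ (fun k => xk k 1) (x 1) (fun k => y k 1)
      + (∑ k, ((ρ k + L k/4)/ρ k^2 * L k^2 * ((T k:ℝ)+1)^2 + L k/2 * (T k:ℝ)^2))
          * ‖x (0+1) - x 0‖^2
      + 2 * ∑ i ∈ Finset.Icc 0 Tbar, |∑ k, ((ρ k - 7 * L k) / 2 * ‖xk k (i + 1) - xk k i‖ ^ 2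
          + α k / 2 * ‖x (i + 1) - x i‖ ^ 2)|, ?_⟩
  intro t ht
  have hsb := sumbound t
  have hA1 := Finset.sum_inter_add_sum_sdiff (Finset.Icc Tbar t) (Finset.Icc 1 t)
    (fun i => ∑ k, ((ρ k - 7 * L k) / 2 * ‖xk k (i + 1) - xk k i‖ ^ 2
      + α k / 2 * ‖x (i + 1) - x i‖ ^ 2))
  have hB1 := Finset.sum_inter_add_sum_sdiff (Finset.Icc 1 t) (Finset.Icc Tbar t)
    (fun i => ∑ k, ((ρ k - 7 * L k) / 2 * ‖xk k (i + 1) - xk k i‖ ^ 2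
      + α k / 2 * ‖x (i + 1) - x i‖ ^ 2))
  have hint : ∑ i ∈ Finset.Icc Tbar t ∩ Finset.Icc 1 t,
        ∑ k, ((ρ k - 7 * L k) / 2 * ‖xk k (i + 1) - xk k i‖ ^ 2
          + α k / 2 * ‖x (i + 1) - x i‖ ^ 2)
      = ∑ i ∈ Finset.Icc 1 t ∩ Finset.Icc Tbar t,
        ∑ k, ((ρ k - 7 * L k) / 2 * ‖xk k (i + 1) - xk k i‖ ^ 2
          + α k / 2 * ‖x (i + 1) - x i‖ ^ 2) := by
    rw [Finset.inter_comm]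
  have hd1 : ∑ i ∈ Finset.Icc Tbar t \ Finset.Icc 1 t,
        ∑ k, ((ρ k - 7 * L k) / 2 * ‖xk k (i + 1) - xk k i‖ ^ 2
          + α k / 2 * ‖x (i + 1) - x i‖ ^ 2)
      ≤ ∑ i ∈ Finset.Icc 0 Tbar, |∑ k, ((ρ k - 7 * L k) / 2 * ‖xk k (i + 1) - xk k i‖ ^ 2
          + α k / 2 * ‖x (i + 1) - x i‖ ^ 2)| := by
    refine (Finset.sum_le_sum (fun i _ => le_abs_self _)).trans ?_
    apply Finset.sum_le_sum_of_subset_of_nonneg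
    · intro m hm
      simp only [Finset.mem_sdiff, Finset.mem_Icc] at *
      omega
    · intro i _ _; exact abs_nonneg _
  have hd2 : -(∑ i ∈ Finset.Icc 1 t \ Finset.Icc Tbar t,
        ∑ k, ((ρ k - 7 * L k) / 2 * ‖xk k (i + 1) - xk k i‖ ^ 2
          + α k / 2 * ‖x (i + 1) - x i‖ ^ 2))
      ≤ ∑ i ∈ Finset.Icc 0 Tbar, |∑ k, ((ρ k - 7 * L k) / 2 * ‖xk k (i + 1) - xk k i‖ ^ 2
          + α k / 2 * ‖x (i + 1) - x i‖ ^ 2)| := by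
    have hstep1 : ∑ i ∈ Finset.Icc 1 t \ Finset.Icc Tbar t,
        -(∑ k, ((ρ k - 7 * L k) / 2 * ‖xk k (i + 1) - xk k i‖ ^ 2
          + α k / 2 * ‖x (i + 1) - x i‖ ^ 2))
        ≤ ∑ i ∈ Finset.Icc 1 t \ Finset.Icc Tbar t,
          |∑ k, ((ρ k - 7 * L k) / 2 * ‖xk k (i + 1) - xk k i‖ ^ 2
            + α k / 2 * ‖x (i + 1) - x i‖ ^ 2)| :=
      Finset.sum_le_sum (fun i _ => neg_le_abs _)
    have hstep2 : ∑ i ∈ Finset.Icc 1 t \ Finset.Icc Tbar t,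
        |∑ k, ((ρ k - 7 * L k) / 2 * ‖xk k (i + 1) - xk k i‖ ^ 2
          + α k / 2 * ‖x (i + 1) - x i‖ ^ 2)|
        ≤ ∑ i ∈ Finset.Icc 0 Tbar, |∑ k, ((ρ k - 7 * L k) / 2 * ‖xk k (i + 1) - xk k i‖ ^ 2
          + α k / 2 * ‖x (i + 1) - x i‖ ^ 2)| := by
      apply Finset.sum_le_sum_of_subset_of_nonneg
      · intro m hm
        simp only [Finset.mem_sdiff, Finset.mem_Icc] at *
        omega
      · intro i _ _; exact abs_nonneg _
    rw [Finset.sum_neg_distrib] at hstep1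
    linarith [hstep1, hstep2]
  linarith [hsb, hA1, hB1, hint, hd1, hd2]
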